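/- (Quantum determinant inversion formula for the XXZ monodromy matrix.) Let N ≥ 1, ξ₁,…,ξ_N ∈ ℂ, and let T(λ) = L_N(λ,ξ_N)···L_1(λ,ξ_1) be the 2×2 monodromy matrix with operator entries on (ℂ²)^{⊗N}. Then, for every λ ∈ ℂ such that sinh(λ−ξ_j+η) ≠ 0, sinh(λ−ξ_j) ≠ 0 and sinh(λ−ξ_j−η) ≠ 0 for all j, one has [σ^y · T^t(λ−η) · σ^y] · T(λ) = [∏_{j=1}^{N} b(λ−ξ_j−η)] · Id, where the transpose and the conjugation by σ^y are taken in the 2×2 auxiliary indices and the product on the left is the product of 2×2 operator-valued matrices; equivalently T(λ)⁻¹ = σ^y T^t(λ−η) σ^y / det_q T(λ) with det_q T(λ) = ∏_{j=1}^{N} b(λ−ξ_j−η). -/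

import Mathlib

/- STATEMENT 16: Quantum determinant inversion formula for the XXZ monodromy matrix. -/

noncomputable section

open Complex Matrix Filter

/-- `b(λ) = sinh(λ)/sinh(λ+η)`. -/
def bf (η lam : ℂ) : ℂ := Complex.sinh lam / Complex.sinh (lam + η)

/-- `c(λ) = sinh(η)/sinh(λ+η)`. -/
def cf (η lam : ℂ) : ℂ := Complex.sinh η / Complex.sinh (lam + η)

/-- Pauli matrix σʸ. -/
def sigy : Matrix (Fin 2) (Fin 2) ℂ := !![0, -Complex.I; Complex.I, 0]

/-- `e_n^{αβ}`: the elementary 2×2 matrix with entry 1 in row α, column β, at site n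
of (ℂ²)^{⊗N}. -/
def Ee {N : ℕ} (n : Fin N) (α β : Fin 2) :
    Matrix (Fin N → Fin 2) (Fin N → Fin 2) ℂ :=
  Matrix.of fun s s' => if s n = α ∧ s' = Function.update s n β then 1 else 0

/-- A one-site operator acting on the site n of (ℂ²)^{⊗N}. -/
def emb1c {N : ℕ} (n : Fin N) (M : Matrix (Fin 2) (Fin 2) ℂ) :
    Matrix (Fin N → Fin 2) (Fin N → Fin 2) ℂ :=
  Matrix.of fun s s' => M (s n) (s' n) * (if s = Function.update s' n (s n) then 1 else 0)

/-- The XXZ L-matrix `L_n(λ,μ)`, a 2×2 matrix of operators on (ℂ²)^{⊗N}. -/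
def Lmat {N : ℕ} (η : ℂ) (n : Fin N) (lam mu : ℂ) :
    Matrix (Fin 2) (Fin 2) (Matrix (Fin N → Fin 2) (Fin N → Fin 2) ℂ) :=
  !![Ee n 0 0 + bf η (lam - mu) • Ee n 1 1, cf η (lam - mu) • Ee n 1 0;
     cf η (lam - mu) • Ee n 0 1, bf η (lam - mu) • Ee n 0 0 + Ee n 1 1]

/-- The XXZ L-matrix `L̃_n(μ,λ)`. -/
def Ltil {N : ℕ} (η : ℂ) (n : Fin N) (mu lam : ℂ) :
    Matrix (Fin 2) (Fin 2) (Matrix (Fin N → Fin 2) (Fin N → Fin 2) ℂ) :=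
  !![Ee n 0 0 + bf η (mu - lam) • Ee n 1 1, cf η (mu - lam) • Ee n 0 1;
     cf η (mu - lam) • Ee n 1 0, bf η (mu - lam) • Ee n 0 0 + Ee n 1 1]

/-- The quantum monodromy matrix
`T^{QTM}(λ) = L̃_N(−β/N,λ)L_{N−1}(λ,β/N)···L̃_2(−β/N,λ)L_1(λ,β/N)`
(sites are numbered 0,…,N−1 here, so the original site j corresponds to index j−1 and
the even original sites are the odd indices). -/
def Tqtm (η : ℂ) (N : ℕ) (β : ℂ) (lam : ℂ) :
    Matrix (Fin 2) (Fin 2) (Matrix (Fin N → Fin 2) (Fin N → Fin 2) ℂ) :=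
  ((List.ofFn fun j : Fin N =>
    if (j : ℕ) % 2 = 1 then Ltil η j (-β / N) lam else Lmat η j lam (β / N)).reverse).prod

/-- `a(λ) = b(−β/N−λ)^{N/2}`. -/
def aQ (η : ℂ) (N : ℕ) (β : ℂ) (lam : ℂ) : ℂ := bf η (-β / N - lam) ^ (N / 2)

/-- The inhomogeneities: `ξ_j = η − β/N` for even original j (odd index), `ξ_j = β/N`
for odd original j (even index). -/
def xiQ (η : ℂ) (N : ℕ) (β : ℂ) (j : Fin N) : ℂ :=
  if (j : ℕ) % 2 = 1 then η - β / N else β / N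

/-- The inhomogeneous monodromy matrix `T(λ) = L_N(λ,ξ_N)···L_1(λ,ξ_1)`. -/
def Trtr (η : ℂ) (N : ℕ) (ξ : Fin N → ℂ) (lam : ℂ) :
    Matrix (Fin 2) (Fin 2) (Matrix (Fin N → Fin 2) (Fin N → Fin 2) ℂ) :=
  ((List.ofFn fun j : Fin N => Lmat η j lam (ξ j)).reverse).prod

/-- σʸ acting on the 2×2 auxiliary indices. -/
def sigyOp (N : ℕ) : Matrix (Fin 2) (Fin 2) (Matrix (Fin N → Fin 2) (Fin N → Fin 2) ℂ) :=
  sigy.map (algebraMap ℂ (Matrix (Fin N → Fin 2) (Fin N → Fin 2) ℂ))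

/-! ### Auxiliary lemmas -/

lemma Ee_mul_apply {N : ℕ} (n : Fin N) (α β : Fin 2)
    (M : Matrix (Fin N → Fin 2) (Fin N → Fin 2) ℂ) (s s' : Fin N → Fin 2) :
    (Ee n α β * M) s s' = if s n = α then M (Function.update s n β) s' else 0 := by
  classical
  rw [Matrix.mul_apply, Finset.sum_eq_single (Function.update s n β)]
  · by_cases h : s n = α <;> simp [Ee, h]
  · intro t _ ht; simp [Ee, ht]
  · simp

lemma Ee_mul_Ee {N : ℕ} (n : Fin N) (α β γ δ : Fin 2) :
    Ee n α β * Ee n γ δ = if β = γ then Ee n α δ else 0 := by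
  ext s s'
  rw [Ee_mul_apply]
  by_cases h1 : β = γ <;> by_cases h2 : s n = α <;>
    simp [Ee, h1, h2, Function.update_idem]

lemma Ee_one {N : ℕ} (n : Fin N) : Ee n 0 0 + Ee n 1 1 = 1 := by
  ext s s'
  have hv : ∀ v : Fin 2, v = 0 ∨ v = 1 := by decide
  have hu : Function.update s n (s n) = s := Function.update_eq_self n s
  rcases hv (s n) with h | h <;>
    rw [h] at hu <;>
    simp [Ee, h, Matrix.one_apply, hu, eq_comm]

lemma Ee_comm {N : ℕ} {n m : Fin N} (h : n ≠ m) (α β γ δ : Fin 2) :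
    Commute (Ee n α β) (Ee m γ δ) := by
  have key : ∀ s s', (Ee n α β * Ee m γ δ) s s'
      = if s n = α ∧ s m = γ ∧ s' = Function.update (Function.update s n β) m δ
        then 1 else 0 := by
    intro s s'
    rw [Ee_mul_apply]
    by_cases h1 : s n = α <;>
      simp [Ee, h1, Function.update_of_ne (Ne.symm h), and_assoc]
  have key' : ∀ s s', (Ee m γ δ * Ee n α β) s s'
      = if s n = α ∧ s m = γ ∧ s' = Function.update (Function.update s n β) m δ
        then 1 else 0 := by
    intro s s'
    rw [Ee_mul_apply]
    by_cases h1 : s m = γ <;>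
      simp [Ee, h1, Function.update_of_ne h, Function.update_comm h, and_assoc, and_comm]
  ext s s'
  rw [key, key']

lemma sigyOp_eq (N : ℕ) :
    sigyOp N = !![0, (-Complex.I) • 1; Complex.I • 1, 0] := by
  ext i j
  fin_cases i <;> fin_cases j <;>
    simp [sigyOp, sigy, Algebra.algebraMap_eq_smul_one]

lemma transpose_fin_two' {R : Type*} [Ring R] (A B C D : R) :
    (!![A, B; C, D])ᵀ = !![A, C; B, D] := by
  ext i j; fin_cases i <;> fin_cases j <;> rfl

lemma sigy_conj {R : Type*} [Ring R] [Algebra ℂ R] (A B C D : R) :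
    !![(0:R), (-Complex.I) • 1; Complex.I • 1, 0] * (!![A, B; C, D])ᵀ *
      !![(0:R), (-Complex.I) • 1; Complex.I • 1, 0] = !![D, -B; -C, A] := by
  rw [transpose_fin_two']
  ext i j
  fin_cases i <;> fin_cases j <;>
    simp [Matrix.mul_apply, Fin.sum_univ_two, smul_mul_assoc, mul_smul_comm,
      smul_smul, Complex.I_mul_I]

lemma sigyOp_mul_self (N : ℕ) : sigyOp N * sigyOp N = 1 := by
  rw [sigyOp_eq]
  ext i j
  fin_cases i <;> fin_cases j <;>
    simp [Matrix.mul_apply, Fin.sum_univ_two, Matrix.one_apply, smul_smul,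
      Complex.I_mul_I, smul_mul_assoc, mul_smul_comm]

lemma sinh_add_mul_sinh_sub (x y : ℂ) :
    Complex.sinh (x + y) * Complex.sinh (x - y) =
      Complex.sinh x ^ 2 - Complex.sinh y ^ 2 := by
  rw [Complex.sinh_add, Complex.sinh_sub]
  have hx := Complex.cosh_sq x
  have hy := Complex.cosh_sq y
  linear_combination Complex.sinh x ^ 2 * hy - Complex.sinh y ^ 2 * hx

/-- One-site inversion identity. -/
lemma onesite (η : ℂ) {N : ℕ} (n : Fin N) (ξ lam : ℂ)
    (h1 : Complex.sinh (lam - ξ + η) ≠ 0) (h2 : Complex.sinh (lam - ξ) ≠ 0) :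
    sigyOp N * (Lmat η n (lam - η) ξ)ᵀ * sigyOp N * Lmat η n lam ξ
      = bf η (lam - ξ - η) • 1 := by
  have e0 : lam - η - ξ = lam - ξ - η := by ring
  have e1 : lam - ξ - η + η = lam - ξ := by ring
  have hc : cf η (lam - ξ) = cf η (lam - ξ - η) * bf η (lam - ξ) := by
    unfold cf bf
    rw [e1]
    field_simp
  have hb : bf η (lam - ξ - η) = bf η (lam - ξ) * (1 - cf η (lam - ξ - η) ^ 2) := by
    unfold bf cf
    rw [e1]
    field_simp
    linear_combination sinh_add_mul_sinh_sub (lam - ξ) η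
  rw [Lmat, Lmat, e0, sigyOp_eq, sigy_conj, hb, hc]
  refine Matrix.ext fun i j => ?_
  fin_cases i <;> fin_cases j <;>
    · simp [Matrix.mul_apply, Fin.sum_univ_two, Ee_mul_Ee, add_mul, mul_add,
        smul_mul_assoc, mul_smul_comm, smul_smul, Matrix.one_apply]
      try rw [← Ee_one n]
      try module

/-- Entries of `Lmat` at site `m ≠ j` commute with the elementary matrices at site `j`. -/
lemma commute_Ee_Lmat {N : ℕ} {j m : Fin N} (h : j ≠ m) (η lam mu : ℂ)
    (α β a b : Fin 2) : Commute (Ee j α β) (Lmat η m lam mu a b) := by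
  fin_cases a <;> fin_cases b <;>
    simp only [Lmat, Fin.zero_eta, Fin.mk_one, Matrix.cons_val', Matrix.cons_val_zero,
      Matrix.cons_val_one, Matrix.head_cons, Matrix.head_fin_const, Matrix.empty_val',
      Matrix.cons_val_fin_one, Matrix.of_apply]
  · exact (Ee_comm h α β 0 0).add_right ((Ee_comm h α β 1 1).smul_right _)
  · exact (Ee_comm h α β 1 0).smul_right _
  · exact (Ee_comm h α β 0 1).smul_right _
  · exact ((Ee_comm h α β 0 0).smul_right _).add_right (Ee_comm h α β 1 1)

/-- Entries of a product of `Lmat`s over sites not containing `j` commute with the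
elementary matrices at site `j`. -/
lemma commute_Ee_prod {N : ℕ} (j : Fin N)
    (f : Fin N → Matrix (Fin 2) (Fin 2) (Matrix (Fin N → Fin 2) (Fin N → Fin 2) ℂ))
    (l : List (Fin N)) (hf : ∀ m ∈ l, ∀ a b α β, Commute (Ee j α β) (f m a b))
    (a b α β : Fin 2) : Commute (Ee j α β) ((l.map f).prod a b) := by
  induction l generalizing a b with
  | nil =>
    simp only [List.map_nil, List.prod_nil]
    rw [Matrix.one_apply]
    split
    · exact Commute.one_right _
    · exact Commute.zero_right _
  | cons m t ih =>
    simp only [List.map_cons, List.prod_cons]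
    rw [Matrix.mul_apply]
    exact Commute.sum_right _ _ _ fun c _ =>
      (hf m (List.mem_cons_self) a c α β).mul_right
        (ih (fun r hr => hf r (List.mem_cons_of_mem m hr)) c b)

/-- Entries of `Lmat` at site `j` commute with anything commuting with all `Ee j`. -/
lemma commute_Lmat_left {N : ℕ} {j : Fin N} (η lam mu : ℂ)
    (X : Matrix (Fin N → Fin 2) (Fin N → Fin 2) ℂ)
    (hX : ∀ α β, Commute (Ee j α β) X) (a b : Fin 2) :
    Commute (Lmat η j lam mu a b) X := by
  fin_cases a <;> fin_cases b <;>
    simp only [Lmat, Fin.zero_eta, Fin.mk_one, Matrix.cons_val', Matrix.cons_val_zero,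
      Matrix.cons_val_one, Matrix.head_cons, Matrix.head_fin_const, Matrix.empty_val',
      Matrix.cons_val_fin_one, Matrix.of_apply]
  · exact (hX 0 0).add_left ((hX 1 1).smul_left _)
  · exact (hX 1 0).smul_left _
  · exact (hX 0 1).smul_left _
  · exact ((hX 0 0).smul_left _).add_left (hX 1 1)

/-- Transposition reverses products of 2×2 matrices with commuting entries. -/
lemma transpose_mul_comm {R : Type*} [NonUnitalNonAssocSemiring R]
    (A B : Matrix (Fin 2) (Fin 2) R)
    (h : ∀ i j k l, Commute (A i j) (B k l)) : (A * B)ᵀ = Bᵀ * Aᵀ := by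
  ext i k
  simp only [Matrix.transpose_apply, Matrix.mul_apply, Fin.sum_univ_two]
  rw [(h k 0 0 i).eq, (h k 1 1 i).eq]

lemma assoc_helper {R : Type*} [Monoid R] (S P L L2 T : R) (hS : S * S = 1) :
    S * (P * L) * S * (L2 * T) = (S * P * S) * ((S * L * S) * L2) * T := by
  have h2 : ∀ x : R, S * (S * x) = x := fun x => by rw [← mul_assoc, hS, one_mul]
  simp only [mul_assoc, h2]

/-- Main induction. -/
lemma key_induction (η : ℂ) {N : ℕ} (ξ : Fin N → ℂ) (lam : ℂ)
    (h1 : ∀ j, Complex.sinh (lam - ξ j + η) ≠ 0)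
    (h2 : ∀ j, Complex.sinh (lam - ξ j) ≠ 0)
    (l : List (Fin N)) (hl : l.Nodup) :
    sigyOp N * ((l.map fun m => Lmat η m (lam - η) (ξ m)).prod)ᵀ * sigyOp N *
      (l.map fun m => Lmat η m lam (ξ m)).prod
    = (l.map fun m => bf η (lam - ξ m - η)).prod • 1 := by
  induction l with
  | nil =>
    simp only [List.map_nil, List.prod_nil, Matrix.transpose_one, mul_one,
      sigyOp_mul_self, one_smul]
  | cons m t ih =>
    rw [List.nodup_cons] at hl
    obtain ⟨hm, ht⟩ := hl
    have hcomm : ∀ i j k l', Commute (Lmat η m (lam - η) (ξ m) i j)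
        (((t.map fun r => Lmat η r (lam - η) (ξ r)).prod) k l') := by
      intro i j k l'
      refine commute_Lmat_left η (lam - η) (ξ m) _ (fun α β => ?_) i j
      exact commute_Ee_prod m _ t
        (fun r hr a b α' β' =>
          commute_Ee_Lmat (fun hmr => hm (by rw [hmr]; exact hr)) η (lam - η) (ξ r) α' β' a b) k l' α β
    simp only [List.map_cons, List.prod_cons]
    rw [transpose_mul_comm _ _ hcomm,
      assoc_helper _ _ _ _ _ (sigyOp_mul_self N),
      onesite η m (ξ m) lam (h1 m) (h2 m),
      Matrix.mul_smul, mul_one, Matrix.smul_mul, ih ht, smul_smul]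

/-- `[σ^y T^t(λ−η) σ^y]·T(λ) = ∏_j b(λ−ξ_j−η) · Id`, i.e.
`T(λ)⁻¹ = σ^y T^t(λ−η) σ^y / det_q T(λ)` with `det_q T(λ) = ∏_j b(λ−ξ_j−η)`. -/
theorem quantum_determinant_inversion (η : ℂ) (hη : Complex.sinh η ≠ 0)
    (N : ℕ) (hN : 1 ≤ N) (ξ : Fin N → ℂ) (lam : ℂ)
    (h1 : ∀ j, Complex.sinh (lam - ξ j + η) ≠ 0)
    (h2 : ∀ j, Complex.sinh (lam - ξ j) ≠ 0)
    (h3 : ∀ j, Complex.sinh (lam - ξ j - η) ≠ 0) :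
    sigyOp N * (Trtr η N ξ (lam - η))ᵀ * sigyOp N * Trtr η N ξ lam =
      (∏ j : Fin N, bf η (lam - ξ j - η)) • 1 := by
  have hT : ∀ c : ℂ, Trtr η N ξ c
      = ((List.finRange N).reverse.map fun m => Lmat η m c (ξ m)).prod := by
    intro c
    rw [Trtr, List.ofFn_eq_map, ← List.map_reverse]
  rw [hT, hT, key_induction η ξ lam h1 h2 _ (List.nodup_reverse.mpr (List.nodup_finRange N)),
    List.map_reverse, List.prod_reverse, ← List.ofFn_eq_map, List.prod_ofFn]

end
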